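/- Let J₁,...,J₇ be anticommuting skew-symmetric orthogonal operators on R⁸. Then the 28 operators {J_j : 1 ≤ j ≤ 7} ∪ {J_jJ_k : 1 ≤ j < k ≤ 7} form a basis of the space of skew-symmetric linear operators on R⁸. -/
import Mathlib


open RealInnerProductSpace

noncomputable section Stmt18Aux

namespace Stmt18Aux

abbrev E := EuclideanSpace ℝ (Fin 8)

abbrev tr : (E →ₗ[ℝ] E) →ₗ[ℝ] ℝ := LinearMap.trace ℝ E

/-- `A` anticommutes with `K`. -/
def AC (K A : E →ₗ[ℝ] E) : Prop := A * K = -(K * A)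

/-- `A` commutes with `K`. -/
def CO (K A : E →ₗ[ℝ] E) : Prop := A * K = K * A

lemma AC.mul_ac {K A B : E →ₗ[ℝ] E} (hA : AC K A) (hB : AC K B) : CO K (A * B) := by
  unfold AC CO at *
  calc A * B * K = A * (B * K) := by rw [mul_assoc]
  _ = A * -(K * B) := by rw [hB]
  _ = -(A * K) * B := by rw [mul_neg, neg_mul, mul_assoc]
  _ = K * A * B := by rw [hA, neg_neg]
  _ = K * (A * B) := by rw [mul_assoc]

lemma CO.mul_ac {K A B : E →ₗ[ℝ] E} (hA : CO K A) (hB : AC K B) : AC K (A * B) := by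
  unfold AC CO at *
  calc A * B * K = A * (B * K) := by rw [mul_assoc]
  _ = A * -(K * B) := by rw [hB]
  _ = -(K * (A * B)) := by rw [mul_neg, ← mul_assoc, hA, mul_assoc]

lemma AC.left_mul {K A : E →ₗ[ℝ] E} (hA : AC K A) : AC K (K * A) := by
  unfold AC at *
  calc K * A * K = K * (A * K) := by rw [mul_assoc]
  _ = K * -(K * A) := by rw [hA]
  _ = -(K * (K * A)) := by rw [mul_neg]

/-- trace of an operator anticommuting with a "complex structure" vanishes. -/
lemma AC.trace_eq_zero {K A : E →ₗ[ℝ] E} (hK : K * K = -1) (h : AC K A) : tr A = 0 := by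
  have h' : K * A = -(A * K) := by rw [h, neg_neg]
  have h1 : tr A = -(tr A) := by
    calc tr A = tr (-(A * (K * K))) := by rw [hK, mul_neg_one, neg_neg]
    _ = -(tr ((A * K) * K)) := by rw [map_neg, mul_assoc]
    _ = -(tr (K * (A * K))) := by rw [LinearMap.trace_mul_comm]
    _ = -(tr (-((A * K) * K))) := by rw [← mul_assoc, h', neg_mul]
    _ = tr (A * (K * K)) := by rw [map_neg, neg_neg, mul_assoc]
    _ = -(tr A) := by rw [hK, mul_neg_one, map_neg]
  linarith

lemma trace_one : tr 1 = 8 := by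
  rw [LinearMap.trace_one]
  simp [finrank_euclideanSpace_fin]

lemma exists_fresh (a b c d : Fin 7) : ∃ m : Fin 7, m ≠ a ∧ m ≠ b ∧ m ≠ c ∧ m ≠ d := by
  revert a b c d; decide

section WithJ

variable {J : Fin 7 → (E →ₗ[ℝ] E)}
  (hsq : ∀ i, J i * J i = -1)
  (hac : ∀ {i j : Fin 7}, i ≠ j → AC (J i) (J j))

include hsq hac

lemma trace_J (i : Fin 7) : tr (J i) = 0 := by
  obtain ⟨m, hm, -⟩ := exists_fresh i i i i
  exact AC.trace_eq_zero (hsq m) (hac hm)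

lemma trace_JJ {i j : Fin 7} (h : i ≠ j) : tr (J i * J j) = 0 :=
  AC.trace_eq_zero (hsq i) (AC.left_mul (hac h))

lemma trace_JJJ {i j k : Fin 7} (hij : i ≠ j) (hik : i ≠ k) (hjk : j ≠ k) :
    tr (J i * J j * J k) = 0 := by
  obtain ⟨m, hmi, hmj, hmk, -⟩ := exists_fresh i j k k
  exact AC.trace_eq_zero (hsq m)
    (CO.mul_ac (AC.mul_ac (hac hmi) (hac hmj)) (hac hmk))

lemma trace_JJJJ {i j k l : Fin 7} (hij : i ≠ j) (hik : i ≠ k) (hil : i ≠ l)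
    (hjk : j ≠ k) (hjl : j ≠ l) (hkl : k ≠ l) :
    tr (J i * J j * J k * J l) = 0 := by
  have hB : AC (J i) (J j * J k * J l) :=
    CO.mul_ac (AC.mul_ac (hac hij) (hac hik)) (hac hil)
  have : J i * J j * J k * J l = J i * (J j * J k * J l) := by
    rw [mul_assoc (J i) (J j) (J k), mul_assoc (J i) (J j * J k) (J l)]
  rw [this]
  exact AC.trace_eq_zero (hsq i) (AC.left_mul hB)

/-- the index type for the family -/
abbrev ι := Sum (Fin 7) {p : Fin 7 × Fin 7 // p.1 < p.2}

/-- the 28-member family -/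
def v (J : Fin 7 → (E →ₗ[ℝ] E)) : ι → (E →ₗ[ℝ] E) :=
  Sum.elim J (fun p => J p.1.1 * J p.1.2)

lemma trace_J_mul_JJ (i : Fin 7) {k l : Fin 7} (hkl : k ≠ l) :
    tr (J i * (J k * J l)) = 0 := by
  by_cases hik : i = k
  · subst hik
    have : J i * (J i * J l) = -(J l) := by rw [← mul_assoc, hsq, neg_one_mul]
    rw [this, map_neg, trace_J hsq @hac l, neg_zero]
  · by_cases hil : i = l
    · subst hil
      have e1 : J k * J i = -(J i * J k) := hac hik
      have : J i * (J k * J i) = J k := by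
        rw [e1, mul_neg, ← mul_assoc, hsq, neg_one_mul, neg_neg]
      rw [this, trace_J hsq @hac k]
    · rw [← mul_assoc]
      exact trace_JJJ hsq @hac hik hil hkl

lemma gram (a b : ι) : tr (v J a * v J b) = if a = b then -8 else 0 := by
  have hsqmul : ∀ (i : Fin 7) (A : E →ₗ[ℝ] E), J i * (J i * A) = -A := by
    intro i A; rw [← mul_assoc, hsq, neg_one_mul]
  match a, b with
  | Sum.inl i, Sum.inl j =>
    simp only [v, Sum.elim_inl, Sum.inl.injEq]
    by_cases h : i = j
    · subst h
      rw [if_pos rfl, hsq, map_neg, trace_one]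
    · rw [if_neg h, trace_JJ hsq @hac h]
  | Sum.inl i, Sum.inr ⟨⟨k, l⟩, hkl⟩ =>
    simp only [v, Sum.elim_inl, Sum.elim_inr, reduceCtorEq, if_false]
    exact trace_J_mul_JJ hsq @hac i (ne_of_lt hkl)
  | Sum.inr ⟨⟨k, l⟩, hkl⟩, Sum.inl i =>
    simp only [v, Sum.elim_inl, Sum.elim_inr, reduceCtorEq, if_false]
    rw [LinearMap.trace_mul_comm]
    exact trace_J_mul_JJ hsq @hac i (ne_of_lt hkl)
  | Sum.inr ⟨⟨i, j⟩, hij⟩, Sum.inr ⟨⟨l, m⟩, hlm⟩ =>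
    simp only [v, Sum.elim_inr, Sum.inr.injEq, Subtype.mk.injEq, Prod.mk.injEq]
    have hij' : i ≠ j := ne_of_lt hij
    have hlm' : l ≠ m := ne_of_lt hlm
    by_cases hil : i = l
    · subst hil
      by_cases hjm : j = m
      · subst hjm
        rw [if_pos ⟨rfl, rfl⟩]
        have e1 : J j * J i = -(J i * J j) := hac hij'
        have : (J i * J j) * (J i * J j) = -1 := by
          calc (J i * J j) * (J i * J j) = J i * ((J j * J i) * J j) := by noncomm_ring
          _ = J i * ((-(J i * J j)) * J j) := by rw [e1]
          _ = -((J i * J i) * (J j * J j)) := by noncomm_ring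
          _ = -1 := by rw [hsq, hsq]; norm_num
        rw [this, map_neg, trace_one]
      · rw [if_neg (by tauto)]
        have e1 : J j * J i = -(J i * J j) := hac hij'
        have : (J i * J j) * (J i * J m) = J j * J m := by
          calc (J i * J j) * (J i * J m) = J i * ((J j * J i) * J m) := by noncomm_ring
          _ = J i * ((-(J i * J j)) * J m) := by rw [e1]
          _ = -((J i * J i) * (J j * J m)) := by noncomm_ring
          _ = J j * J m := by rw [hsq]; noncomm_ring
        rw [this, trace_JJ hsq @hac hjm]
    · rw [if_neg (by tauto)]
      by_cases hjl : j = l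
      · subst hjl
        have : (J i * J j) * (J j * J m) = -(J i * J m) := by
          calc (J i * J j) * (J j * J m) = J i * ((J j * J j) * J m) := by noncomm_ring
          _ = -(J i * J m) := by rw [hsq]; noncomm_ring
        have him : i ≠ m := ne_of_lt (lt_trans hij hlm)
        rw [this, map_neg, trace_JJ hsq @hac him, neg_zero]
      · by_cases hjm : j = m
        · subst hjm
          have e1 : J j * J l = -(J l * J j) := hac (fun h => hjl h.symm)
          have : (J i * J j) * (J l * J j) = J i * J l := by
            calc (J i * J j) * (J l * J j) = J i * ((J j * J l) * J j) := by noncomm_ring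
            _ = J i * ((-(J l * J j)) * J j) := by rw [e1]
            _ = -(J i * (J l * (J j * J j))) := by noncomm_ring
            _ = J i * J l := by rw [hsq]; noncomm_ring
          rw [this, trace_JJ hsq @hac hil]
        · by_cases him : i = m
          · subst him
            have hli : l ≠ i := fun h => hil h.symm
            have hlj : l ≠ j := ne_of_lt (lt_trans hlm hij)
            rw [LinearMap.trace_mul_comm]
            have : (J l * J i) * (J i * J j) = -(J l * J j) := by
              calc (J l * J i) * (J i * J j) = J l * ((J i * J i) * J j) := by noncomm_ring
              _ = -(J l * J j) := by rw [hsq]; noncomm_ring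
            rw [this, map_neg, trace_JJ hsq @hac hlj, neg_zero]
          · have : (J i * J j) * (J l * J m) = J i * J j * J l * J m := by noncomm_ring
            rw [this]
            exact trace_JJJJ hsq @hac hij' hil him hjl hjm hlm'

lemma lin_indep : LinearIndependent ℝ (v J) := by
  rw [Fintype.linearIndependent_iff]
  intro g hg a
  have h : tr (v J a * ∑ i : ι, g i • v J i) = 0 := by rw [hg, mul_zero, map_zero]
  rw [Finset.mul_sum] at h
  simp only [mul_smul_comm, map_sum, map_smul, smul_eq_mul] at h
  simp only [gram hsq @hac, mul_ite, mul_zero] at h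
  rw [Finset.sum_ite_eq] at h
  simp only [Finset.mem_univ, if_true] at h
  linarith

end WithJ

/-- the submodule of skew-symmetric operators -/
def S : Submodule ℝ (E →ₗ[ℝ] E) where
  carrier := {T | ∀ X Y : E, ⟪T X, Y⟫ = -⟪X, T Y⟫}
  add_mem' := by
    intro a b ha hb X Y
    simp only [LinearMap.add_apply, inner_add_left, inner_add_right, ha X Y, hb X Y]
    ring
  zero_mem' := by intro X Y; simp
  smul_mem' := by
    intro c T hT X Y
    simp only [LinearMap.smul_apply, real_inner_smul_left, real_inner_smul_right, hT X Y]
    ring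

abbrev κ := {p : Fin 8 × Fin 8 // p.1 < p.2}

/-- standard basis vectors -/
def e (i : Fin 8) : E := EuclideanSpace.single i (1 : ℝ)

/-- reading off the above-diagonal entries -/
def φ : S →ₗ[ℝ] (κ → ℝ) where
  toFun := fun T p => (T.1 (e p.1.2)) p.1.1
  map_add' := by intro a b; funext p; rfl
  map_smul' := by intro c a; funext p; rfl

lemma inner_e_right (x : E) (k : Fin 8) : ⟪x, e k⟫ = x k := by
  simp [e, EuclideanSpace.inner_single_right]

lemma inner_e_left (x : E) (k : Fin 8) : ⟪e k, x⟫ = x k := by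
  simp [e, EuclideanSpace.inner_single_left]

lemma entry_skew {T : E →ₗ[ℝ] E} (hT : T ∈ S) (i j : Fin 8) :
    (T (e j)) i = -((T (e i)) j) := by
  have h := hT (e j) (e i)
  rwa [inner_e_right (T (e j)) i, inner_e_left (T (e i)) j] at h

lemma phi_injective : Function.Injective φ := by
  intro T U h
  have h0 : ∀ p : κ, (T.1 (e p.1.2)) p.1.1 = (U.1 (e p.1.2)) p.1.1 := fun p => congrFun h p
  have key : ∀ j i : Fin 8, (T.1 (e j)) i = (U.1 (e j)) i := by
    intro j i
    rcases lt_trichotomy i j with hij | hij | hij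
    · exact h0 ⟨(i, j), hij⟩
    · subst hij
      have hTd := entry_skew T.2 i i
      have hUd := entry_skew U.2 i i
      have hT0 : (T.1 (e i)) i = 0 := by linarith
      have hU0 : (U.1 (e i)) i = 0 := by linarith
      rw [hT0, hU0]
    · rw [entry_skew T.2 i j, entry_skew U.2 i j, h0 ⟨(j, i), hij⟩]
  refine Subtype.ext (Module.Basis.ext (EuclideanSpace.basisFun (Fin 8) ℝ).toBasis ?_)
  intro j
  rw [OrthonormalBasis.coe_toBasis, EuclideanSpace.basisFun_apply]
  show T.1 (e j) = U.1 (e j)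
  ext i
  exact key j i

lemma finrank_S_le : Module.finrank ℝ S ≤ 28 := by
  have h := LinearMap.finrank_le_finrank_of_injective phi_injective
  rwa [Module.finrank_fintype_fun_eq_card, show Fintype.card κ = 28 from rfl] at h

end Stmt18Aux

theorem stmt18
    (J : Fin 7 → (EuclideanSpace ℝ (Fin 8) →ₗ[ℝ] EuclideanSpace ℝ (Fin 8)))
    (hskew : ∀ i X Y, ⟪J i X, Y⟫ = -⟪X, J i Y⟫)
    (horth : ∀ i X, ‖J i X‖ = ‖X‖)
    (hanti : ∀ i j, (J i) ∘ₗ (J j) + (J j) ∘ₗ (J i) =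
      ((-2 : ℝ) * (if i = j then (1 : ℝ) else 0)) •
        (LinearMap.id : EuclideanSpace ℝ (Fin 8) →ₗ[ℝ] EuclideanSpace ℝ (Fin 8))) :
    LinearIndependent ℝ
      (Sum.elim J (fun p : {p : Fin 7 × Fin 7 // p.1 < p.2} => (J p.1.1) ∘ₗ (J p.1.2))) ∧
    ∀ T : EuclideanSpace ℝ (Fin 8) →ₗ[ℝ] EuclideanSpace ℝ (Fin 8),
      (∀ X Y, ⟪T X, Y⟫ = -⟪X, T Y⟫) →
      T ∈ Submodule.span ℝ (Set.range
        (Sum.elim J (fun p : {p : Fin 7 × Fin 7 // p.1 < p.2} => (J p.1.1) ∘ₗ (J p.1.2)))) := by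
  classical
  open Stmt18Aux in
  have hsq : ∀ i, J i * J i = -1 := by
    intro i
    have h := hanti i i
    rw [if_pos rfl] at h
    show J i ∘ₗ J i = -1
    have h1 : (1 : E →ₗ[ℝ] E) = LinearMap.id := rfl
    rw [h1]
    linear_combination (norm := module) (2:ℝ)⁻¹ • h
  have hac : ∀ {i j : Fin 7}, i ≠ j → Stmt18Aux.AC (J i) (J j) := by
    intro i j hij
    have h := hanti j i
    rw [if_neg (fun h' => hij h'.symm)] at h
    show J j ∘ₗ J i = -(J i ∘ₗ J j)
    linear_combination (norm := module) h
  have hindep : LinearIndependent ℝ (Stmt18Aux.v J) := Stmt18Aux.lin_indep hsq @hac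
  refine ⟨hindep, ?_⟩
  have hmem : ∀ a : Stmt18Aux.ι, Stmt18Aux.v J a ∈ Stmt18Aux.S := by
    intro a
    match a with
    | Sum.inl i => exact fun X Y => hskew i X Y
    | Sum.inr ⟨⟨k, l⟩, hkl⟩ =>
      intro X Y
      show ⟪J k (J l X), Y⟫ = -⟪X, J k (J l Y)⟫
      rw [hskew k (J l X) Y, hskew l X (J k Y), neg_neg]
      have hklne : k ≠ l := ne_of_lt hkl
      rw [show J l (J k Y) = (J l * J k) Y from rfl, hac hklne]
      simp only [LinearMap.neg_apply, inner_neg_right, Module.End.mul_apply]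
  set v' : Stmt18Aux.ι → Stmt18Aux.S := fun a => ⟨Stmt18Aux.v J a, hmem a⟩ with hv'def
  have hv' : LinearIndependent ℝ v' :=
    LinearIndependent.of_comp (Stmt18Aux.S).subtype hindep
  have hcard : Fintype.card Stmt18Aux.ι = 28 := rfl
  have hfr : Module.finrank ℝ Stmt18Aux.S = 28 :=
    le_antisymm Stmt18Aux.finrank_S_le (by rw [← hcard]; exact hv'.fintype_card_le_finrank)
  have hspan : Submodule.span ℝ (Set.range v') = ⊤ :=
    hv'.span_eq_top_of_card_eq_finrank (hcard.trans hfr.symm)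
  intro T hT
  have hTS : T ∈ Stmt18Aux.S := hT
  have h1 : (⟨T, hTS⟩ : Stmt18Aux.S) ∈ Submodule.span ℝ (Set.range v') :=
    hspan ▸ Submodule.mem_top
  have h2 := Submodule.mem_map_of_mem (f := (Stmt18Aux.S).subtype) h1
  rw [Submodule.map_span, ← Set.range_comp] at h2
  exact h2
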